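/- Let p ≥ 1, let (ξ_i)_{i∈ℤ} be a stationary sequence of real random variables with E|ξ_0|^p < ∞, (a_j)_{j∈ℤ} real numbers with ∑_{j∈ℤ}|a_j| < ∞, X_k = ∑_{j∈ℤ} a_j ξ_{k−j}, S_n = ∑_{k=1}^n X_k, S_n^{(ξ)} = ∑_{j=1}^n ξ_j, and A = ∑_{j∈ℤ} a_j. Assume there is a constant C > 0 and a sequence of positive reals b_n → ∞ such that E(max_{1≤j≤n} |S_j^{(ξ)}|^p) ≤ C b_n^p for all n, and that E((b_n^{−1} max_{1≤j≤n} |ξ_j|)^p) → 0 as n → ∞. Then b_n^{−p} E(max_{1≤j≤n} |S_j − A S_j^{(ξ)}|^p) → 0 as n → ∞. -/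

import Mathlib

open MeasureTheory Filter Topology ENNReal

open MeasureTheory Filter Topology ENNReal

section helpers
variable {Ω : Type*} [MeasurableSpace Ω]

lemma hlp_biSup_le {ι : Type*} {s : Finset ι} {f : ι → ℝ} {B : ℝ} (hB : 0 ≤ B)
    (h : ∀ i ∈ s, f i ≤ B) : (⨆ i ∈ s, f i) ≤ B := by
  refine Real.iSup_le (fun i => Real.iSup_le (fun hi => h i hi) hB) hB

lemma hlp_biSup_nonneg {ι : Type*} {s : Finset ι} {f : ι → ℝ} (h : ∀ i, 0 ≤ f i) :
    0 ≤ ⨆ i ∈ s, f i := by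
  rcases isEmpty_or_nonempty ι with hι | hι
  · rw [Real.iSup_of_isEmpty]
  · exact Real.iSup_nonneg fun i => Real.iSup_nonneg fun _ => h i

lemma hlp_biSup_eq_sup' {ι : Type*} {s : Finset ι} (hs : s.Nonempty) {f : ι → ℝ}
    (hf : ∀ i, 0 ≤ f i) : (⨆ i ∈ s, f i) = s.sup' hs f := by
  obtain ⟨i₀, hi₀⟩ := hs
  have hsup0 : (0:ℝ) ≤ s.sup' ⟨i₀, hi₀⟩ f := le_trans (hf i₀) (Finset.le_sup' f hi₀)
  refine le_antisymm (hlp_biSup_le hsup0 fun i hi => Finset.le_sup' f hi) ?_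
  refine Finset.sup'_le _ f fun i hi => ?_
  have hbdd : BddAbove (Set.range fun i => ⨆ _ : i ∈ s, f i) := by
    refine ⟨s.sup' ⟨i₀, hi₀⟩ f, ?_⟩
    rintro x ⟨j, rfl⟩
    by_cases h : j ∈ s
    · show (⨆ _ : j ∈ s, f j) ≤ _
      rw [ciSup_pos h]; exact Finset.le_sup' f h
    · haveI : IsEmpty (j ∈ s) := ⟨fun hh => h hh⟩
      show (⨆ _ : j ∈ s, f j) ≤ _
      rw [Real.iSup_of_isEmpty]; exact hsup0
  exact le_ciSup_of_le hbdd i (by rw [ciSup_pos hi])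

lemma hlp_ofReal_biSup {ι : Type*} {s : Finset ι} (hs : s.Nonempty) (f : ι → ℝ)
    (hf : ∀ i, 0 ≤ f i) :
    ENNReal.ofReal (⨆ i ∈ s, f i) = ⨆ i ∈ s, ENNReal.ofReal (f i) := by
  have hmono : Monotone ENNReal.ofReal := fun x y h => ENNReal.ofReal_le_ofReal h
  rw [hlp_biSup_eq_sup' hs hf, ← Finset.sup_eq_iSup, ← Finset.sup'_eq_sup hs,
    Finset.comp_sup'_eq_sup'_comp hs ENNReal.ofReal hmono.map_sup]
  rfl

lemma hlp_measurable_biSup {ι : Type*} [Countable ι] {s : Finset ι} (hs : s.Nonempty)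
    (f : ι → Ω → ℝ) (hf : ∀ i, Measurable (f i)) (h0 : ∀ i ω, 0 ≤ f i ω) :
    Measurable fun ω => ⨆ i ∈ s, f i ω := by
  have : (fun ω => ⨆ i ∈ s, f i ω) = s.sup' hs f := by
    funext ω
    rw [hlp_biSup_eq_sup' hs (fun i => h0 i ω), Finset.sup'_apply]
  rw [this]
  exact Finset.measurable_sup' hs fun i _ => hf i

lemma hlp_Lp_sum_le (μ : Measure Ω) {p : ℝ} (hp : 1 ≤ p) {ι : Type*} (s : Finset ι)
    (f : ι → Ω → ℝ≥0∞) (hf : ∀ i, Measurable (f i)) :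
    (∫⁻ ω, (∑ i ∈ s, f i ω) ^ p ∂μ) ^ (1/p) ≤ ∑ i ∈ s, (∫⁻ ω, f i ω ^ p ∂μ) ^ (1/p) := by
  classical
  induction s using Finset.cons_induction with
  | empty =>
      have h1 : (0:ℝ≥0∞) ^ p = 0 := ENNReal.zero_rpow_of_pos (lt_of_lt_of_le one_pos hp)
      have h2 : (0:ℝ≥0∞) ^ (1/p) = 0 := ENNReal.zero_rpow_of_pos (by positivity)
      simp [h1, h2]
      exact lt_of_lt_of_le one_pos hp
  | cons a s ha ih =>
      simp only [Finset.sum_cons]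
      calc (∫⁻ ω, (f a ω + ∑ i ∈ s, f i ω) ^ p ∂μ) ^ (1/p)
          ≤ (∫⁻ ω, f a ω ^ p ∂μ) ^ (1/p) + (∫⁻ ω, (∑ i ∈ s, f i ω) ^ p ∂μ) ^ (1/p) :=
            ENNReal.lintegral_Lp_add_le (hf a).aemeasurable
              (Finset.measurable_sum s fun i _ => hf i).aemeasurable hp
        _ ≤ _ := add_le_add_right ih _

lemma hlp_rpow_iSup {g : ℕ → ℝ≥0∞} {q : ℝ} (hq : 0 < q) :
    (⨆ N, g N) ^ q = ⨆ N, g N ^ q := by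
  refine Monotone.map_iSup_of_continuousAt (f := fun x : ℝ≥0∞ => x ^ q) (g := g) ?_ ?_ ?_
  · exact ENNReal.continuous_rpow_const.continuousAt
  · exact fun x y h => ENNReal.rpow_le_rpow h hq.le
  · simpa using ENNReal.zero_rpow_of_pos hq

lemma hlp_Lp_tsum_le (μ : Measure Ω) {p : ℝ} (hp : 1 ≤ p)
    (f : ℤ → Ω → ℝ≥0∞) (hf : ∀ j, Measurable (f j)) :
    (∫⁻ ω, (∑' j, f j ω) ^ p ∂μ) ^ (1/p) ≤ ∑' j, (∫⁻ ω, f j ω ^ p ∂μ) ^ (1/p) := by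
  classical
  have hp0 : (0:ℝ) < p := lt_of_lt_of_le one_pos hp
  set e : ℕ ≃ ℤ := (Denumerable.eqv ℤ).symm with he
  set s : ℕ → Finset ℤ := fun N => (Finset.range N).image e with hs
  have hsmono : Monotone s := fun N M h =>
    Finset.image_subset_image (Finset.range_subset_range.2 h)
  have hkey : ∀ ω, (∑' j, f j ω) = ⨆ N, ∑ j ∈ s N, f j ω := by
    intro ω
    refine le_antisymm ?_ (iSup_le fun N => ENNReal.sum_le_tsum _)
    rw [ENNReal.tsum_eq_iSup_sum]
    refine iSup_le fun t => ?_
    refine le_iSup_of_le (t.sup (fun j => e.symm j) + 1) ?_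
    refine Finset.sum_le_sum_of_subset fun j hj => ?_
    refine Finset.mem_image.2 ⟨e.symm j, ?_, e.apply_symm_apply j⟩
    exact Finset.mem_range.2 (Nat.lt_succ_of_le (Finset.le_sup hj))
  have hFmeas : ∀ N, Measurable fun ω => (∑ j ∈ s N, f j ω) ^ p := fun N =>
    ENNReal.continuous_rpow_const.measurable.comp
      (Finset.measurable_sum _ fun j _ => hf j)
  calc (∫⁻ ω, (∑' j, f j ω) ^ p ∂μ) ^ (1/p)
      = (∫⁻ ω, ⨆ N, (∑ j ∈ s N, f j ω) ^ p ∂μ) ^ (1/p) := by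
        congr 1
        refine lintegral_congr fun ω => ?_
        rw [hkey ω, hlp_rpow_iSup hp0]
    _ = (⨆ N, ∫⁻ ω, (∑ j ∈ s N, f j ω) ^ p ∂μ) ^ (1/p) := by
        congr 1
        refine lintegral_iSup hFmeas ?_
        intro N M h ω
        exact ENNReal.rpow_le_rpow
          (Finset.sum_le_sum_of_subset (hsmono h)) hp0.le
    _ = ⨆ N, (∫⁻ ω, (∑ j ∈ s N, f j ω) ^ p ∂μ) ^ (1/p) :=
        hlp_rpow_iSup (by positivity)
    _ ≤ ⨆ N, ∑ j ∈ s N, (∫⁻ ω, f j ω ^ p ∂μ) ^ (1/p) := by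
        exact iSup_mono fun N => hlp_Lp_sum_le μ hp (s N) f hf
    _ ≤ ∑' j, (∫⁻ ω, f j ω ^ p ∂μ) ^ (1/p) :=
        iSup_le fun N => ENNReal.sum_le_tsum _

end helpers

lemma hlp_rpow_inv (p : ℝ) (hp : p ≠ 0) (x : ℝ≥0∞) : (x ^ (1/p)) ^ p = x := by
  rw [← ENNReal.rpow_mul, one_div, inv_mul_cancel₀ hp, ENNReal.rpow_one]

lemma hlp_rpow_inv' (p : ℝ) (hp : p ≠ 0) (x : ℝ≥0∞) : (x ^ p) ^ (1/p) = x := by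
  rw [← ENNReal.rpow_mul, one_div, mul_inv_cancel₀ hp, ENNReal.rpow_one]

lemma hlp_NP_smul {Ω : Type*} [MeasurableSpace Ω] (μ : Measure Ω) {p : ℝ} (hp : 1 ≤ p)
    (c : ℝ≥0∞) {g : Ω → ℝ≥0∞} (hg : Measurable g) :
    (∫⁻ ω, (c * g ω) ^ p ∂μ) ^ (1/p) = c * (∫⁻ ω, g ω ^ p ∂μ) ^ (1/p) := by
  have hp0 : (0:ℝ) < p := lt_of_lt_of_le one_pos hp
  have : ∀ ω, (c * g ω) ^ p = c ^ p * g ω ^ p := fun ω =>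
    ENNReal.mul_rpow_of_nonneg _ _ hp0.le
  simp_rw [this]
  have hgp : Measurable fun ω => g ω ^ p := ENNReal.continuous_rpow_const.measurable.comp hg
  rw [lintegral_const_mul _ hgp,
    ENNReal.mul_rpow_of_nonneg _ _ (by positivity : (0:ℝ) ≤ 1/p), hlp_rpow_inv' p hp0.ne']

lemma hlp_sum_shift {M : Type*} [AddCommMonoid M] (f : ℤ → M) (l : ℕ) (j : ℤ) :
    ∑ k ∈ Finset.Icc 1 l, f ((k:ℤ) - j) = ∑ i ∈ Finset.Icc (1 - j) ((l:ℤ) - j), f i := by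
  refine Finset.sum_nbij' (fun k => (k:ℤ) - j) (fun i => (i + j).toNat) ?_ ?_ ?_ ?_ ?_
  · intro k hk; simp only [Finset.mem_Icc] at *; omega
  · intro i hi; simp only [Finset.mem_Icc] at *; omega
  · intro k hk; simp only [Finset.mem_Icc] at hk; beta_reduce; omega
  · intro i hi; simp only [Finset.mem_Icc] at hi; beta_reduce; omega
  · intro k hk; rfl

lemma hlp_diff_bound (f : ℤ → ℝ) (l n m : ℕ) (hl : 1 ≤ l) (hln : l ≤ n) (j : ℤ)
    (hj : |j| ≤ m) :
    ENNReal.ofReal |∑ k ∈ Finset.Icc 1 l, f ((k:ℤ) - j) - ∑ k ∈ Finset.Icc 1 l, f (k:ℤ)| ≤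
      (2*m : ℕ) * ⨆ i ∈ Finset.Icc (1-(m:ℤ)) ((n:ℤ)+m), ENNReal.ofReal |f i| := by
  classical
  set W : ℝ≥0∞ := ⨆ i ∈ Finset.Icc (1-(m:ℤ)) ((n:ℤ)+m), ENNReal.ofReal |f i| with hW
  set Afin : Finset ℤ := Finset.Icc (1 - j) ((l:ℤ) - j) with hA
  set Bfin : Finset ℤ := Finset.Icc (1:ℤ) (l:ℤ) with hB
  have hsum2 : ∑ k ∈ Finset.Icc 1 l, f (k:ℤ) = ∑ i ∈ Bfin, f i := by
    have := hlp_sum_shift f l 0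
    simpa using this
  rw [hlp_sum_shift f l j, hsum2, ← Finset.sum_sdiff_sub_sum_sdiff]
  have hmemW : ∀ i : ℤ, 1 - (m:ℤ) ≤ i → i ≤ (n:ℤ) + m → ENNReal.ofReal |f i| ≤ W := by
    intro i h1 h2
    exact le_iSup₂_of_le i (Finset.mem_Icc.2 ⟨h1, h2⟩) le_rfl
  have habs : ∀ j : ℤ, |j| ≤ (m:ℤ) → -(m:ℤ) ≤ j ∧ j ≤ m := fun j hj => abs_le.1 hj
  obtain ⟨hjm1, hjm2⟩ := habs j hj
  have hsub1 : ∀ (t : Finset ℤ), (∀ i ∈ t, 1 - (m:ℤ) ≤ i ∧ i ≤ (n:ℤ) + m) → t.card ≤ m →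
      ENNReal.ofReal |∑ i ∈ t, f i| ≤ (m:ℝ≥0∞) * W := by
    intro t ht hcard
    calc ENNReal.ofReal |∑ i ∈ t, f i| ≤ ENNReal.ofReal (∑ i ∈ t, |f i|) :=
          ENNReal.ofReal_le_ofReal (Finset.abs_sum_le_sum_abs _ _)
      _ = ∑ i ∈ t, ENNReal.ofReal |f i| :=
          ENNReal.ofReal_sum_of_nonneg (fun i _ => abs_nonneg _)
      _ ≤ t.card • W := Finset.sum_le_card_nsmul _ _ _
          (fun i hi => hmemW i (ht i hi).1 (ht i hi).2)
      _ = (t.card : ℝ≥0∞) * W := nsmul_eq_mul _ _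
      _ ≤ (m:ℝ≥0∞) * W := by
          exact mul_le_mul' (by exact_mod_cast Nat.cast_le.2 hcard) le_rfl
  -- the two sdiff pieces
  have hAB : ∀ i ∈ Afin \ Bfin, 1 - (m:ℤ) ≤ i ∧ i ≤ (n:ℤ) + m := by
    intro i hi
    simp only [hA, hB, Finset.mem_sdiff, Finset.mem_Icc, not_and, not_le] at hi
    omega
  have hBA : ∀ i ∈ Bfin \ Afin, 1 - (m:ℤ) ≤ i ∧ i ≤ (n:ℤ) + m := by
    intro i hi
    simp only [hA, hB, Finset.mem_sdiff, Finset.mem_Icc, not_and, not_le] at hi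
    omega
  have hcardAB : (Afin \ Bfin).card ≤ m := by
    rcases le_or_gt 0 j with hj0 | hj0
    · have hsub : Afin \ Bfin ⊆ Finset.Icc (1-j) 0 := by
        intro i hi
        simp only [hA, hB, Finset.mem_sdiff, Finset.mem_Icc, not_and, not_le] at hi
        simp only [Finset.mem_Icc]; omega
      calc (Afin \ Bfin).card ≤ (Finset.Icc (1-j) 0).card := Finset.card_le_card hsub
        _ ≤ m := by rw [Int.card_Icc]; omega
    · have hsub : Afin \ Bfin ⊆ Finset.Icc ((l:ℤ)+1) ((l:ℤ)-j) := by
        intro i hi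
        simp only [hA, hB, Finset.mem_sdiff, Finset.mem_Icc, not_and, not_le] at hi
        simp only [Finset.mem_Icc]; omega
      calc (Afin \ Bfin).card ≤ _ := Finset.card_le_card hsub
        _ ≤ m := by rw [Int.card_Icc]; omega
  have hcardBA : (Bfin \ Afin).card ≤ m := by
    rcases le_or_gt 0 j with hj0 | hj0
    · have hsub : Bfin \ Afin ⊆ Finset.Icc ((l:ℤ)-j+1) (l:ℤ) := by
        intro i hi
        simp only [hA, hB, Finset.mem_sdiff, Finset.mem_Icc, not_and, not_le] at hi
        simp only [Finset.mem_Icc]; omega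
      calc (Bfin \ Afin).card ≤ _ := Finset.card_le_card hsub
        _ ≤ m := by rw [Int.card_Icc]; omega
    · have hsub : Bfin \ Afin ⊆ Finset.Icc 1 (-j) := by
        intro i hi
        simp only [hA, hB, Finset.mem_sdiff, Finset.mem_Icc, not_and, not_le] at hi
        simp only [Finset.mem_Icc]; omega
      calc (Bfin \ Afin).card ≤ _ := Finset.card_le_card hsub
        _ ≤ m := by rw [Int.card_Icc]; omega
  calc ENNReal.ofReal |∑ i ∈ Afin \ Bfin, f i - ∑ i ∈ Bfin \ Afin, f i|
      ≤ ENNReal.ofReal (|∑ i ∈ Afin \ Bfin, f i| + |∑ i ∈ Bfin \ Afin, f i|) :=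
        ENNReal.ofReal_le_ofReal (abs_sub _ _)
    _ = ENNReal.ofReal |∑ i ∈ Afin \ Bfin, f i| + ENNReal.ofReal |∑ i ∈ Bfin \ Afin, f i| :=
        ENNReal.ofReal_add (abs_nonneg _) (abs_nonneg _)
    _ ≤ (m:ℝ≥0∞) * W + (m:ℝ≥0∞) * W :=
        add_le_add (hsub1 _ hAB hcardAB) (hsub1 _ hBA hcardBA)
    _ = (2*m : ℕ) * W := by push_cast; ring

lemma hlp_convert {Ω : Type*} [MeasurableSpace Ω] (μ : MeasureTheory.Measure Ω) {p : ℝ}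
    (hp0 : 0 < p) {V : Ω → ℝ} (hV : Measurable V) (hVnn : ∀ ω, 0 ≤ V ω)
    (hfin : (∫⁻ ω, ENNReal.ofReal (V ω) ^ p ∂μ) ≠ ⊤) :
    ENNReal.ofReal (∫ ω, V ω ^ p ∂μ) = ∫⁻ ω, ENNReal.ofReal (V ω) ^ p ∂μ := by
  have hpt : ∀ ω, ENNReal.ofReal (V ω ^ p) = ENNReal.ofReal (V ω) ^ p := fun ω =>
    (ENNReal.ofReal_rpow_of_nonneg (hVnn ω) hp0.le).symm
  have hmeas : Measurable fun ω => V ω ^ p := hV.pow measurable_const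
  have hint : Integrable (fun ω => V ω ^ p) μ := by
    refine ⟨hmeas.aestronglyMeasurable, ?_⟩
    rw [hasFiniteIntegral_iff_ofReal
      (Filter.Eventually.of_forall fun ω => Real.rpow_nonneg (hVnn ω) p)]
    have : (∫⁻ ω, ENNReal.ofReal (V ω ^ p) ∂μ) = ∫⁻ ω, ENNReal.ofReal (V ω) ^ p ∂μ :=
      lintegral_congr fun ω => hpt ω
    rw [this]
    exact hfin.lt_top
  rw [ofReal_integral_eq_lintegral_ofReal hint
    (Filter.Eventually.of_forall fun ω => Real.rpow_nonneg (hVnn ω) p)]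
  exact lintegral_congr fun ω => hpt ω

section auxdefs
variable {Ω : Type*}

/-- `Lᵖ`-type functional on `ℝ≥0∞`-valued functions. -/
noncomputable def auxNP [MeasurableSpace Ω] (μ : MeasureTheory.Measure Ω) (p : ℝ)
    (g : Ω → ENNReal) : ENNReal :=
  (∫⁻ ω, g ω ^ p ∂μ) ^ (1/p)

noncomputable def auxUn (ξ : ℤ → Ω → ℝ) (n : ℕ) (ω : Ω) : ENNReal :=
  ⨆ j ∈ Finset.Icc 1 n, ENNReal.ofReal |ξ (j:ℤ) ω|

noncomputable def auxSsup (Sξ : ℕ → Ω → ℝ) (n : ℕ) (ω : Ω) : ENNReal :=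
  ⨆ l ∈ Finset.Icc 1 n, ENNReal.ofReal |Sξ l ω|

noncomputable def auxTsup (ξ : ℤ → Ω → ℝ) (n : ℕ) (j : ℤ) (ω : Ω) : ENNReal :=
  ⨆ l ∈ Finset.Icc 1 n, ENNReal.ofReal |∑ k ∈ Finset.Icc 1 l, ξ ((k:ℤ) - j) ω|

noncomputable def auxG (ξ : ℤ → Ω → ℝ) (Sξ : ℕ → Ω → ℝ) (n : ℕ) (j : ℤ) (ω : Ω) : ENNReal :=
  ⨆ l ∈ Finset.Icc 1 n, ENNReal.ofReal |(∑ k ∈ Finset.Icc 1 l, ξ ((k:ℤ) - j) ω) - Sξ l ω|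

noncomputable def auxW (ξ : ℤ → Ω → ℝ) (n m : ℕ) (ω : Ω) : ENNReal :=
  ⨆ i ∈ Finset.Icc (1-(m:ℤ)) ((n:ℤ)+(m:ℤ)), ENNReal.ofReal |ξ i ω|

end auxdefs

set_option maxHeartbeats 2000000 in
/-- **Proposition 4 (Lᵖ part)** of Peligrad–Utev, "Invariance principle for stochastic
processes with short memory". For a stationary sequence of innovations `(ξ_i)_{i∈ℤ}` with
`E|ξ_0|^p < ∞` (`p ≥ 1`), summable coefficients `(a_j)`, linear process
`X_k = ∑_j a_j ξ_{k-j}` with partial sums `S_n`, innovation partial sums `S_n^ξ`, and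
`A = ∑ a_j`: if `E(max_{1≤j≤n} |S_j^ξ|^p) ≤ C b_n^p` with `b_n → ∞` and
`E((b_n⁻¹ max_{1≤j≤n} |ξ_j|)^p) → 0`, then
`b_n^{-p} E(max_{1≤j≤n} |S_j − A S_j^ξ|^p) → 0`. -/
theorem stmt8
    {Ω : Type*} [MeasurableSpace Ω] (μ : Measure Ω) [IsProbabilityMeasure μ]
    (p : ℝ) (hp : 1 ≤ p)
    (ξ : ℤ → Ω → ℝ)
    (hmeas : ∀ i, Measurable (ξ i))
    (hmom : ∀ i, Integrable (fun ω => |ξ i ω| ^ p) μ)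
    (hstat : ∀ k : ℤ,
      Measure.map (fun ω (i : ℤ) => ξ (i + k) ω) μ =
        Measure.map (fun ω (i : ℤ) => ξ i ω) μ)
    (a : ℤ → ℝ) (ha : Summable fun j => |a j|)
    (X : ℤ → Ω → ℝ)
    (hX : ∀ k : ℤ, ∀ᵐ ω ∂μ, HasSum (fun j => a j * ξ (k - j) ω) (X k ω))
    (S Sξ : ℕ → Ω → ℝ)
    (hS : ∀ n ω, S n ω = ∑ k ∈ Finset.Icc 1 n, X (k : ℤ) ω)
    (hSξ : ∀ n ω, Sξ n ω = ∑ j ∈ Finset.Icc 1 n, ξ (j : ℤ) ω)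
    (A : ℝ) (hA : HasSum a A)
    (C : ℝ) (hC : 0 < C)
    (b : ℕ → ℝ) (hbpos : ∀ n, 0 < b n) (hbtop : Tendsto b atTop atTop)
    (hmax : ∀ n, (∫ ω, (⨆ j ∈ Finset.Icc 1 n, |Sξ j ω|) ^ p ∂μ) ≤ C * b n ^ p)
    (hξmax : Tendsto (fun n =>
        ∫ ω, ((b n)⁻¹ * ⨆ j ∈ Finset.Icc 1 n, |ξ (j : ℤ) ω|) ^ p ∂μ)
      atTop (𝓝 0)) :
    Tendsto (fun n =>
        b n ^ (-p) * ∫ ω, (⨆ j ∈ Finset.Icc 1 n, |S j ω - A * Sξ j ω|) ^ p ∂μ)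
      atTop (𝓝 0) := by
  classical
  have hp0 : (0:ℝ) < p := lt_of_lt_of_le one_pos hp
  have hpne : p ≠ 0 := ne_of_gt hp0
  have hpinv : (0:ℝ) < 1/p := by positivity
  -- measurability of the building blocks
  have hSξmeas : ∀ l : ℕ, Measurable (Sξ l) := by
    intro l
    have : Sξ l = fun ω => ∑ j ∈ Finset.Icc 1 l, ξ (j:ℤ) ω := funext fun ω => hSξ l ω
    rw [this]
    exact Finset.measurable_sum _ fun j _ => hmeas _
  have hmeasE : ∀ i : ℤ, Measurable fun ω => ENNReal.ofReal |ξ i ω| :=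
    fun i => (hmeas i).abs.ennreal_ofReal
  have hUnmeas : ∀ n, Measurable (auxUn ξ n) := fun n =>
    Measurable.iSup fun j => Measurable.iSup fun _ => hmeasE _
  have hSsupmeas : ∀ n, Measurable (auxSsup Sξ n) := fun n =>
    Measurable.iSup fun l => Measurable.iSup fun _ => (hSξmeas l).abs.ennreal_ofReal
  have hTsupmeas : ∀ n j, Measurable (auxTsup ξ n j) := fun n j =>
    Measurable.iSup fun l => Measurable.iSup fun _ =>
      (Finset.measurable_sum _ fun k _ => hmeas _).abs.ennreal_ofReal
  have hGmeas : ∀ n j, Measurable (auxG ξ Sξ n j) := fun n j =>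
    Measurable.iSup fun l => Measurable.iSup fun _ =>
      ((Finset.measurable_sum _ fun k _ => hmeas _).sub (hSξmeas l)).abs.ennreal_ofReal
  have hWmeas : ∀ n m, Measurable (auxW ξ n m) := fun n m =>
    Measurable.iSup fun i => Measurable.iSup fun _ => hmeasE _
  -- NP basics
  have hNPmono : ∀ (g h : Ω → ℝ≥0∞), (∀ᵐ ω ∂μ, g ω ≤ h ω) → auxNP μ p g ≤ auxNP μ p h := by
    intro g h hle
    exact ENNReal.rpow_le_rpow
      (lintegral_mono_ae (hle.mono fun ω hω => ENNReal.rpow_le_rpow hω hp0.le)) hpinv.le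
  have hNPadd : ∀ (g h : Ω → ℝ≥0∞), Measurable g → Measurable h →
      auxNP μ p (fun ω => g ω + h ω) ≤ auxNP μ p g + auxNP μ p h := by
    intro g h hg hh
    exact ENNReal.lintegral_Lp_add_le hg.aemeasurable hh.aemeasurable hp
  have hNPsmul : ∀ (c : ℝ≥0∞) (g : Ω → ℝ≥0∞), Measurable g →
      auxNP μ p (fun ω => c * g ω) = c * auxNP μ p g := by
    intro c g hg
    exact hlp_NP_smul μ hp c hg
  -- stationarity transfer
  have hstatF : ∀ F : (ℤ → ℝ) → ℝ≥0∞, Measurable F → ∀ k : ℤ,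
      (∫⁻ ω, F (fun i => ξ (i + k) ω) ∂μ) = ∫⁻ ω, F (fun i => ξ i ω) ∂μ := by
    intro F hF k
    have h1 : Measurable fun ω => fun i : ℤ => ξ (i + k) ω :=
      measurable_pi_lambda _ fun i => hmeas _
    have h2 : Measurable fun ω => fun i : ℤ => ξ i ω :=
      measurable_pi_lambda _ fun i => hmeas _
    rw [← lintegral_map hF h1, ← lintegral_map hF h2, hstat k]
  -- the per-coordinate moment
  set κ : ℝ≥0∞ := (∫⁻ ω, ENNReal.ofReal |ξ 0 ω| ^ p ∂μ) ^ (1/p) with hκdef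
  have hκcoord : ∀ i : ℤ,
      (∫⁻ ω, ENNReal.ofReal |ξ i ω| ^ p ∂μ) = ∫⁻ ω, ENNReal.ofReal |ξ 0 ω| ^ p ∂μ := by
    intro i
    have hFmeas : Measurable fun x : ℤ → ℝ => ENNReal.ofReal |x 0| ^ p :=
      ((measurable_pi_apply 0).abs.ennreal_ofReal).pow measurable_const
    have := hstatF _ hFmeas i
    simpa using this
  have hκbase : ∀ i : ℤ, (∫⁻ ω, ENNReal.ofReal |ξ i ω| ^ p ∂μ) ≠ ⊤ := by
    intro i
    have h1 : ∀ ω, ENNReal.ofReal |ξ i ω| ^ p = ENNReal.ofReal (|ξ i ω| ^ p) := fun ω =>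
      ENNReal.ofReal_rpow_of_nonneg (abs_nonneg _) hp0.le
    simp_rw [h1]
    rw [← ofReal_integral_eq_lintegral_ofReal (hmom i)
      (Filter.Eventually.of_forall fun ω => Real.rpow_nonneg (abs_nonneg _) p)]
    exact ENNReal.ofReal_ne_top
  have hκeq : ∀ i : ℤ, (∫⁻ ω, ENNReal.ofReal |ξ i ω| ^ p ∂μ) ^ (1/p) = κ := by
    intro i; rw [hκdef, hκcoord i]
  have hκne : κ ≠ ⊤ := by
    rw [hκdef]
    exact ENNReal.rpow_ne_top_of_nonneg hpinv.le (hκbase 0)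
  -- finiteness from domination by a finite sum of |ξ|'s
  have hNPsumκ : ∀ {ι : Type} (t : Finset ι) (v : ι → ℤ),
      (∫⁻ ω, (∑ i ∈ t, ENNReal.ofReal |ξ (v i) ω|) ^ p ∂μ) ≠ ⊤ := by
    intro ι t v
    have h1 := hlp_Lp_sum_le μ hp t (fun i ω => ENNReal.ofReal |ξ (v i) ω|)
      (fun i => hmeasE (v i))
    have h2 : ∀ i ∈ t, (∫⁻ ω, ENNReal.ofReal |ξ (v i) ω| ^ p ∂μ) ^ (1/p) = κ :=
      fun i _ => hκeq (v i)
    rw [Finset.sum_congr rfl h2, Finset.sum_const] at h1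
    have h3 : (t.card : ℝ≥0∞) * κ ≠ ⊤ := ENNReal.mul_ne_top (ENNReal.natCast_ne_top _) hκne
    have h4 : ((∫⁻ ω, (∑ i ∈ t, ENNReal.ofReal |ξ (v i) ω|) ^ p ∂μ) ^ (1/p)) ^ p ≤
        ((t.card : ℝ≥0∞) * κ) ^ p :=
      ENNReal.rpow_le_rpow (by simpa [nsmul_eq_mul] using h1) hp0.le
    rw [hlp_rpow_inv p hpne] at h4
    exact ne_top_of_le_ne_top (ENNReal.rpow_ne_top_of_nonneg hp0.le h3) h4
  have hfin_of_le : ∀ (g : Ω → ℝ≥0∞) {ι : Type} (t : Finset ι) (v : ι → ℤ),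
      (∀ ω, g ω ≤ ∑ i ∈ t, ENNReal.ofReal |ξ (v i) ω|) →
      (∫⁻ ω, g ω ^ p ∂μ) ≠ ⊤ := by
    intro g ι t v hle
    exact ne_top_of_le_ne_top (hNPsumκ t v)
      (lintegral_mono fun ω => ENNReal.rpow_le_rpow (hle ω) hp0.le)
  -- pointwise domination of the sups
  have hSsup_le : ∀ n ω, auxSsup Sξ n ω ≤ ∑ k ∈ Finset.Icc 1 n, ENNReal.ofReal |ξ (k:ℤ) ω| := by
    intro n ω
    refine iSup₂_le fun l hl => ?_
    calc ENNReal.ofReal |Sξ l ω|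
        ≤ ∑ k ∈ Finset.Icc 1 l, ENNReal.ofReal |ξ (k:ℤ) ω| := by
          rw [hSξ l ω]
          refine le_trans (ENNReal.ofReal_le_ofReal (Finset.abs_sum_le_sum_abs _ _)) ?_
          rw [ENNReal.ofReal_sum_of_nonneg (fun i _ => abs_nonneg _)]
      _ ≤ ∑ k ∈ Finset.Icc 1 n, ENNReal.ofReal |ξ (k:ℤ) ω| :=
          Finset.sum_le_sum_of_subset
            (Finset.Icc_subset_Icc_right (Finset.mem_Icc.1 hl).2)
  have hUn_le : ∀ n ω, auxUn ξ n ω ≤ ∑ k ∈ Finset.Icc 1 n, ENNReal.ofReal |ξ (k:ℤ) ω| :=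
    fun n ω => iSup₂_le fun j hj =>
      Finset.single_le_sum (f := fun k : ℕ => ENNReal.ofReal |ξ (k:ℤ) ω|)
        (fun i _ => zero_le) hj
  have hSsupfin : ∀ n, (∫⁻ ω, auxSsup Sξ n ω ^ p ∂μ) ≠ ⊤ := fun n =>
    hfin_of_le _ (Finset.Icc 1 n) (fun k => (k:ℤ)) (hSsup_le n)
  have hUnfin : ∀ n, (∫⁻ ω, auxUn ξ n ω ^ p ∂μ) ≠ ⊤ := fun n =>
    hfin_of_le _ (Finset.Icc 1 n) (fun k => (k:ℤ)) (hUn_le n)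
  -- conversion of the maximal-inequality hypothesis
  have hSsupP : ∀ n, 1 ≤ n →
      (∫⁻ ω, auxSsup Sξ n ω ^ p ∂μ) ≤ ENNReal.ofReal (C * b n ^ p) := by
    intro n hn
    have hne : (Finset.Icc 1 n).Nonempty := ⟨1, Finset.mem_Icc.2 ⟨le_rfl, hn⟩⟩
    have hVmeas : Measurable fun ω => ⨆ l ∈ Finset.Icc 1 n, |Sξ l ω| :=
      hlp_measurable_biSup hne _ (fun l => (hSξmeas l).abs) (fun l ω => abs_nonneg _)
    have hpt : ∀ ω, ENNReal.ofReal (⨆ l ∈ Finset.Icc 1 n, |Sξ l ω|) = auxSsup Sξ n ω :=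
      fun ω => hlp_ofReal_biSup hne _ (fun l => abs_nonneg _)
    have hfin : (∫⁻ ω, ENNReal.ofReal (⨆ l ∈ Finset.Icc 1 n, |Sξ l ω|) ^ p ∂μ) ≠ ⊤ := by
      have : (∫⁻ ω, ENNReal.ofReal (⨆ l ∈ Finset.Icc 1 n, |Sξ l ω|) ^ p ∂μ) =
          ∫⁻ ω, auxSsup Sξ n ω ^ p ∂μ := lintegral_congr fun ω => by rw [hpt ω]
      rw [this]; exact hSsupfin n
    have hconv := hlp_convert μ hp0 hVmeas
      (fun ω => hlp_biSup_nonneg fun l => abs_nonneg _) hfin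
    calc (∫⁻ ω, auxSsup Sξ n ω ^ p ∂μ)
        = ∫⁻ ω, ENNReal.ofReal (⨆ l ∈ Finset.Icc 1 n, |Sξ l ω|) ^ p ∂μ :=
          (lintegral_congr fun ω => by rw [hpt ω]).symm
      _ = ENNReal.ofReal (∫ ω, (⨆ l ∈ Finset.Icc 1 n, |Sξ l ω|) ^ p ∂μ) := hconv.symm
      _ ≤ ENNReal.ofReal (C * b n ^ p) := ENNReal.ofReal_le_ofReal (hmax n)
  -- stationarity: shifted maxima obey the same bound
  have hTsupP : ∀ n, 1 ≤ n → ∀ j : ℤ,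
      (∫⁻ ω, auxTsup ξ n j ω ^ p ∂μ) ≤ ENNReal.ofReal (C * b n ^ p) := by
    intro n hn j
    set F : (ℤ → ℝ) → ℝ≥0∞ := fun x =>
      (⨆ l ∈ Finset.Icc 1 n, ENNReal.ofReal |∑ k ∈ Finset.Icc 1 l, x (k:ℤ)|) ^ p with hF
    have hFmeas : Measurable F := by
      refine Measurable.pow ?_ measurable_const
      refine Measurable.iSup fun l => Measurable.iSup fun _ => Measurable.ennreal_ofReal ?_
      exact (Finset.measurable_sum (Finset.Icc 1 l)
        (fun k _ => measurable_pi_apply ((k:ℕ):ℤ))).abs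
    have h := hstatF F hFmeas (-j)
    have e1 : (∫⁻ ω, F (fun i => ξ (i + -j) ω) ∂μ) = ∫⁻ ω, auxTsup ξ n j ω ^ p ∂μ :=
      lintegral_congr fun ω => by
        simp only [hF, auxTsup, sub_eq_add_neg]
    have e2 : (∫⁻ ω, F (fun i => ξ i ω) ∂μ) = ∫⁻ ω, auxSsup Sξ n ω ^ p ∂μ :=
      lintegral_congr fun ω => by
        simp only [hF, auxSsup, hSξ]
    rw [← e1, h, e2]
    exact hSsupP n hn
  -- rpow-extraction of the constant
  have hofRealCb : ∀ n (x : ℝ≥0∞), x ≤ ENNReal.ofReal (C * b n ^ p) →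
      x ^ (1/p) ≤ ENNReal.ofReal (C ^ (1/p) * b n) := by
    intro n x hx
    have h1 : ENNReal.ofReal (C * b n ^ p) = ENNReal.ofReal C * ENNReal.ofReal (b n) ^ p := by
      rw [ENNReal.ofReal_mul hC.le, ENNReal.ofReal_rpow_of_nonneg (hbpos n).le hp0.le]
    calc x ^ (1/p) ≤ (ENNReal.ofReal C * ENNReal.ofReal (b n) ^ p) ^ (1/p) :=
          ENNReal.rpow_le_rpow (h1 ▸ hx) hpinv.le
      _ = ENNReal.ofReal C ^ (1/p) * ENNReal.ofReal (b n) := by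
          rw [ENNReal.mul_rpow_of_nonneg _ _ hpinv.le, hlp_rpow_inv' p hpne]
      _ = ENNReal.ofReal (C ^ (1/p) * b n) := by
          rw [ENNReal.ofReal_mul (by positivity : (0:ℝ) ≤ C ^ (1/p)),
            ENNReal.ofReal_rpow_of_nonneg hC.le hpinv.le]
  -- bound for distant coefficients
  have hGTS : ∀ n (j : ℤ) ω, auxG ξ Sξ n j ω ≤ auxTsup ξ n j ω + auxSsup Sξ n ω := by
    intro n j ω
    refine iSup₂_le fun l hl => ?_
    calc ENNReal.ofReal |(∑ k ∈ Finset.Icc 1 l, ξ ((k:ℤ) - j) ω) - Sξ l ω|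
        ≤ ENNReal.ofReal (|∑ k ∈ Finset.Icc 1 l, ξ ((k:ℤ) - j) ω| + |Sξ l ω|) :=
          ENNReal.ofReal_le_ofReal (abs_sub _ _)
      _ = ENNReal.ofReal |∑ k ∈ Finset.Icc 1 l, ξ ((k:ℤ) - j) ω| +
            ENNReal.ofReal |Sξ l ω| := ENNReal.ofReal_add (abs_nonneg _) (abs_nonneg _)
      _ ≤ _ := add_le_add (le_iSup₂_of_le l hl le_rfl) (le_iSup₂_of_le l hl le_rfl)
  have hGNP2 : ∀ n, 1 ≤ n → ∀ j : ℤ,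
      auxNP μ p (auxG ξ Sξ n j) ≤ ENNReal.ofReal (2 * C ^ (1/p) * b n) := by
    intro n hn j
    calc auxNP μ p (auxG ξ Sξ n j)
        ≤ auxNP μ p (fun ω => auxTsup ξ n j ω + auxSsup Sξ n ω) :=
          hNPmono _ _ (Filter.Eventually.of_forall (hGTS n j))
      _ ≤ auxNP μ p (auxTsup ξ n j) + auxNP μ p (auxSsup Sξ n) :=
          hNPadd _ _ (hTsupmeas n j) (hSsupmeas n)
      _ ≤ ENNReal.ofReal (C ^ (1/p) * b n) + ENNReal.ofReal (C ^ (1/p) * b n) :=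
          add_le_add (hofRealCb n _ (hTsupP n hn j)) (hofRealCb n _ (hSsupP n hn))
      _ = ENNReal.ofReal (2 * C ^ (1/p) * b n) := by
          rw [← ENNReal.ofReal_add (mul_nonneg (by positivity) (hbpos n).le)
            (mul_nonneg (by positivity) (hbpos n).le)]
          congr 1; ring
  -- bound for nearby coefficients
  have hGW : ∀ (n m : ℕ) (j : ℤ), 1 ≤ n → |j| ≤ (m:ℤ) → ∀ ω,
      auxG ξ Sξ n j ω ≤ ((2*m : ℕ) : ℝ≥0∞) * auxW ξ n m ω := by
    intro n m j hn hj ω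
    refine iSup₂_le fun l hl => ?_
    have hl' := Finset.mem_Icc.1 hl
    have := hlp_diff_bound (fun i => ξ i ω) l n m hl'.1 hl'.2 j hj
    rw [hSξ l ω]
    exact this
  -- comparison of windows
  have hWUn : ∀ (n m : ℕ) ω, 1 ≤ n → auxW ξ n m ω ≤ auxUn ξ n ω +
      ∑ i ∈ (Finset.Icc (1-(m:ℤ)) 0 ∪ Finset.Icc ((n:ℤ)+1) ((n:ℤ)+(m:ℤ))),
        ENNReal.ofReal |ξ i ω| := by
    intro n m ω hn
    refine iSup₂_le fun i hi => ?_
    simp only [Finset.mem_Icc] at hi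
    by_cases hin : 1 ≤ i ∧ i ≤ (n:ℤ)
    · refine le_trans ?_ (self_le_add_right _ _)
      refine le_iSup₂_of_le i.toNat ?_ ?_
      · simp only [Finset.mem_Icc]; omega
      · have h : ((i.toNat : ℕ) : ℤ) = i := Int.toNat_of_nonneg (by omega)
        rw [h]
    · refine le_trans ?_ (self_le_add_left _ _)
      refine Finset.single_le_sum (f := fun i => ENNReal.ofReal |ξ i ω|)
        (fun i _ => zero_le) ?_
      simp only [Finset.mem_union, Finset.mem_Icc]
      omega
  have hWNP : ∀ (n m : ℕ), 1 ≤ n →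
      auxNP μ p (auxW ξ n m) ≤ auxNP μ p (auxUn ξ n) + ((2*m : ℕ) : ℝ≥0∞) * κ := by
    intro n m hn
    set bad : Finset ℤ := Finset.Icc (1-(m:ℤ)) 0 ∪ Finset.Icc ((n:ℤ)+1) ((n:ℤ)+(m:ℤ)) with hbad
    have hbadcard : bad.card ≤ 2*m := by
      refine le_trans (Finset.card_union_le _ _) ?_
      rw [Int.card_Icc, Int.card_Icc]
      omega
    calc auxNP μ p (auxW ξ n m)
        ≤ auxNP μ p (fun ω => auxUn ξ n ω + ∑ i ∈ bad, ENNReal.ofReal |ξ i ω|) :=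
          hNPmono _ _ (Filter.Eventually.of_forall fun ω => hWUn n m ω hn)
      _ ≤ auxNP μ p (auxUn ξ n) + auxNP μ p (fun ω => ∑ i ∈ bad, ENNReal.ofReal |ξ i ω|) :=
          hNPadd _ _ (hUnmeas n) (Finset.measurable_sum _ fun i _ => hmeasE i)
      _ ≤ auxNP μ p (auxUn ξ n) + ∑ i ∈ bad, (∫⁻ ω, ENNReal.ofReal |ξ i ω| ^ p ∂μ) ^ (1/p) :=
          add_le_add_right (hlp_Lp_sum_le μ hp bad _ (fun i => hmeasE i)) _
      _ = auxNP μ p (auxUn ξ n) + (bad.card : ℝ≥0∞) * κ := by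
          rw [Finset.sum_congr rfl (fun i _ => hκeq i), Finset.sum_const, nsmul_eq_mul]
      _ ≤ auxNP μ p (auxUn ξ n) + ((2*m : ℕ) : ℝ≥0∞) * κ := by
          refine add_le_add_right (mul_le_mul' ?_ le_rfl) _
          exact_mod_cast Nat.cast_le.2 hbadcard
  have hGNP1 : ∀ (n m : ℕ) (j : ℤ), 1 ≤ n → |j| ≤ (m:ℤ) →
      auxNP μ p (auxG ξ Sξ n j) ≤
        ((2*m : ℕ) : ℝ≥0∞) * (auxNP μ p (auxUn ξ n) + ((2*m : ℕ) : ℝ≥0∞) * κ) := by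
    intro n m j hn hj
    calc auxNP μ p (auxG ξ Sξ n j)
        ≤ auxNP μ p (fun ω => ((2*m : ℕ) : ℝ≥0∞) * auxW ξ n m ω) :=
          hNPmono _ _ (Filter.Eventually.of_forall (hGW n m j hn hj))
      _ = ((2*m : ℕ) : ℝ≥0∞) * auxNP μ p (auxW ξ n m) := hNPsmul _ _ (hWmeas n m)
      _ ≤ _ := mul_le_mul_right (hWNP n m hn) _
  -- a.e. pointwise domination of the main maximum
  have hM_ae : ∀ n : ℕ, 1 ≤ n → ∀ᵐ ω ∂μ,
      ENNReal.ofReal (⨆ l ∈ Finset.Icc 1 n, |S l ω - A * Sξ l ω|) ≤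
        ∑' j : ℤ, ENNReal.ofReal |a j| * auxG ξ Sξ n j ω := by
    intro n hn
    have hae : ∀ᵐ ω ∂μ, ∀ k : ℤ, HasSum (fun j => a j * ξ (k - j) ω) (X k ω) :=
      ae_all_iff.2 hX
    filter_upwards [hae] with ω hω
    have hne : (Finset.Icc 1 n).Nonempty := ⟨1, Finset.mem_Icc.2 ⟨le_rfl, hn⟩⟩
    rw [hlp_ofReal_biSup hne _ (fun l => abs_nonneg _)]
    refine iSup₂_le fun l hl => ?_
    have hsummable : ∀ k : ℤ, Summable fun j => a j * ξ (k - j) ω :=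
      fun k => (hω k).summable
    have hsum1 : Summable fun j => a j * ∑ k ∈ Finset.Icc 1 l, ξ ((k:ℤ) - j) ω := by
      have heq : (fun j => a j * ∑ k ∈ Finset.Icc 1 l, ξ ((k:ℤ) - j) ω) =
          fun j => ∑ k ∈ Finset.Icc 1 l, a j * ξ ((k:ℤ) - j) ω := by
        funext j; exact Finset.mul_sum _ _ _
      rw [heq]
      exact summable_sum fun k _ => hsummable ((k : ℕ) : ℤ)
    have hsum2 : Summable fun j => a j * Sξ l ω := (ha.of_abs).mul_right _
    have hSeq : S l ω = ∑' j, a j * ∑ k ∈ Finset.Icc 1 l, ξ ((k:ℤ) - j) ω := by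
      rw [hS l ω]
      have h1 : ∀ k ∈ Finset.Icc 1 l, X ((k:ℕ):ℤ) ω = ∑' j, a j * ξ ((k:ℤ) - j) ω :=
        fun k _ => ((hω ((k:ℕ):ℤ)).tsum_eq).symm
      rw [Finset.sum_congr rfl h1, ← Summable.tsum_finsetSum (fun k _ => hsummable _)]
      exact tsum_congr fun j => (Finset.mul_sum _ _ _).symm
    have hAeq : A * Sξ l ω = ∑' j, a j * Sξ l ω := by
      rw [← hA.tsum_eq, tsum_mul_right]
    have hdiff : S l ω - A * Sξ l ω =
        ∑' j, a j * ((∑ k ∈ Finset.Icc 1 l, ξ ((k:ℤ) - j) ω) - Sξ l ω) := by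
      rw [hSeq, hAeq, ← Summable.tsum_sub hsum1 hsum2]
      exact tsum_congr fun j => (mul_sub _ _ _).symm
    have hsum3 : Summable fun j =>
        a j * ((∑ k ∈ Finset.Icc 1 l, ξ ((k:ℤ) - j) ω) - Sξ l ω) := by
      have := hsum1.sub hsum2
      simpa [mul_sub] using this
    have habs : |S l ω - A * Sξ l ω| ≤
        ∑' j, |a j * ((∑ k ∈ Finset.Icc 1 l, ξ ((k:ℤ) - j) ω) - Sξ l ω)| := by
      rw [hdiff]
      have hsn : Summable fun j => ‖a j * ((∑ k ∈ Finset.Icc 1 l, ξ ((k:ℤ) - j) ω) - Sξ l ω)‖ := by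
        simp only [Real.norm_eq_abs]
        exact summable_abs_iff.2 hsum3
      have h2 := norm_tsum_le_tsum_norm hsn
      simp only [Real.norm_eq_abs] at h2
      exact h2
    calc ENNReal.ofReal |S l ω - A * Sξ l ω|
        ≤ ENNReal.ofReal (∑' j, |a j * ((∑ k ∈ Finset.Icc 1 l, ξ ((k:ℤ) - j) ω) - Sξ l ω)|) :=
          ENNReal.ofReal_le_ofReal habs
      _ = ∑' j, ENNReal.ofReal |a j * ((∑ k ∈ Finset.Icc 1 l, ξ ((k:ℤ) - j) ω) - Sξ l ω)| :=
          ENNReal.ofReal_tsum_of_nonneg (fun j => abs_nonneg _) (summable_abs_iff.2 hsum3)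
      _ ≤ ∑' j, ENNReal.ofReal |a j| * auxG ξ Sξ n j ω := by
          refine ENNReal.tsum_le_tsum fun j => ?_
          rw [abs_mul, ENNReal.ofReal_mul (abs_nonneg _)]
          refine mul_le_mul_right ?_ _
          unfold auxG
          exact le_iSup₂_of_le l hl le_rfl
  -- the master estimate
  have master : ∀ (s : Finset ℤ) (m : ℕ), (∀ j ∈ s, |j| ≤ (m:ℤ)) → ∀ n, 1 ≤ n →
      auxNP μ p (fun ω => ENNReal.ofReal (⨆ l ∈ Finset.Icc 1 n, |S l ω - A * Sξ l ω|)) ≤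
        ENNReal.ofReal (∑' j, |a j|) *
            (((2*m : ℕ) : ℝ≥0∞) * (auxNP μ p (auxUn ξ n) + ((2*m : ℕ) : ℝ≥0∞) * κ)) +
          ENNReal.ofReal (∑' x : {j : ℤ // j ∉ s}, |a ↑x|) *
            ENNReal.ofReal (2 * C ^ (1/p) * b n) := by
    intro s m hsm n hn
    set K1 : ℝ≥0∞ := ((2*m : ℕ) : ℝ≥0∞) * (auxNP μ p (auxUn ξ n) + ((2*m : ℕ) : ℝ≥0∞) * κ)
      with hK1
    set K2 : ℝ≥0∞ := ENNReal.ofReal (2 * C ^ (1/p) * b n) with hK2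
    calc auxNP μ p (fun ω => ENNReal.ofReal (⨆ l ∈ Finset.Icc 1 n, |S l ω - A * Sξ l ω|))
        ≤ auxNP μ p (fun ω => ∑' j : ℤ, ENNReal.ofReal |a j| * auxG ξ Sξ n j ω) :=
          hNPmono _ _ (hM_ae n hn)
      _ ≤ ∑' j : ℤ, auxNP μ p (fun ω => ENNReal.ofReal |a j| * auxG ξ Sξ n j ω) :=
          hlp_Lp_tsum_le μ hp _ (fun j => (hGmeas n j).const_mul _)
      _ = ∑' j : ℤ, ENNReal.ofReal |a j| * auxNP μ p (auxG ξ Sξ n j) :=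
          tsum_congr fun j => hNPsmul _ _ (hGmeas n j)
      _ ≤ ∑' j : ℤ, ((if j ∈ s then ENNReal.ofReal |a j| * K1 else 0) +
            (if j ∈ s then 0 else ENNReal.ofReal |a j| * K2)) := by
          refine ENNReal.tsum_le_tsum fun j => ?_
          by_cases hj : j ∈ s
          · simp only [hj, if_true, add_zero]
            exact mul_le_mul_right (hGNP1 n m j hn (hsm j hj)) _
          · simp only [hj, if_false, zero_add]
            exact mul_le_mul_right (hGNP2 n hn j) _
      _ = (∑' j : ℤ, if j ∈ s then ENNReal.ofReal |a j| * K1 else 0) +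
            ∑' j : ℤ, (if j ∈ s then 0 else ENNReal.ofReal |a j| * K2) :=
          ENNReal.tsum_add
      _ ≤ ENNReal.ofReal (∑' j, |a j|) * K1 +
            ENNReal.ofReal (∑' x : {j : ℤ // j ∉ s}, |a ↑x|) * K2 := by
          refine add_le_add ?_ ?_
          · rw [tsum_eq_sum (s := s) (fun j hj => if_neg hj)]
            have h1 : ∑ j ∈ s, (if j ∈ s then ENNReal.ofReal |a j| * K1 else 0) =
                ∑ j ∈ s, ENNReal.ofReal |a j| * K1 :=
              Finset.sum_congr rfl fun j hj => if_pos hj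
            rw [h1, ← Finset.sum_mul]
            refine mul_le_mul_left ?_ _
            rw [← ENNReal.ofReal_sum_of_nonneg (fun j _ => abs_nonneg _)]
            exact ENNReal.ofReal_le_ofReal (Summable.sum_le_tsum s (fun j _ => abs_nonneg _) ha)
          · have h2 : ∀ j : ℤ, (if j ∈ s then (0:ℝ≥0∞) else ENNReal.ofReal |a j| * K2) =
                (if j ∈ s then 0 else ENNReal.ofReal |a j|) * K2 := by
              intro j; by_cases hj : j ∈ s <;> simp [hj]
            simp_rw [h2]
            rw [ENNReal.tsum_mul_right]
            refine mul_le_mul_left (le_of_eq ?_) _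
            have he2 : ENNReal.ofReal (∑' x : {j : ℤ // j ∉ s}, |a ↑x|) =
                ∑' x : {j : ℤ // j ∉ s}, ENNReal.ofReal |a ↑x| :=
              ENNReal.ofReal_tsum_of_nonneg (fun x => abs_nonneg _) (ha.subtype _)
            have he1 : (∑' x : {j : ℤ // j ∉ s}, ENNReal.ofReal |a ↑x|) =
                ∑' j : ℤ, Set.indicator {j : ℤ | j ∉ s} (fun j => ENNReal.ofReal |a j|) j := by
              exact tsum_subtype {j : ℤ | j ∉ s} fun j => ENNReal.ofReal |a j|
            rw [he2, he1]
            refine tsum_congr fun j => ?_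
            by_cases hj : j ∈ s <;>
              simp [Set.indicator_apply, Set.mem_setOf_eq, hj]
  -- eventual smallness of the innovation maxima
  have hUnNP_ev : ∀ δ : ℝ, 0 < δ → ∀ᶠ n in atTop,
      auxNP μ p (auxUn ξ n) ≤ ENNReal.ofReal (δ * b n) := by
    intro δ hδ
    have hev := (tendsto_order.1 hξmax).2 (δ ^ p) (Real.rpow_pos_of_pos hδ p)
    filter_upwards [hev, eventually_ge_atTop 1] with n hrn hn
    have hne : (Finset.Icc 1 n).Nonempty := ⟨1, Finset.mem_Icc.2 ⟨le_rfl, hn⟩⟩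
    have hVmeas : Measurable fun ω => ⨆ j ∈ Finset.Icc 1 n, |ξ (j:ℤ) ω| :=
      hlp_measurable_biSup hne _ (fun j => (hmeas _).abs) (fun j ω => abs_nonneg _)
    have hVnn : ∀ ω, (0:ℝ) ≤ ⨆ j ∈ Finset.Icc 1 n, |ξ (j:ℤ) ω| :=
      fun ω => hlp_biSup_nonneg fun j => abs_nonneg _
    have hpt : ∀ ω, ENNReal.ofReal (⨆ j ∈ Finset.Icc 1 n, |ξ (j:ℤ) ω|) = auxUn ξ n ω :=
      fun ω => hlp_ofReal_biSup hne _ fun j => abs_nonneg _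
    have hbinv : (0:ℝ) ≤ (b n)⁻¹ := inv_nonneg.2 (hbpos n).le
    have hpt2 : ∀ ω, ENNReal.ofReal ((b n)⁻¹ * ⨆ j ∈ Finset.Icc 1 n, |ξ (j:ℤ) ω|) =
        ENNReal.ofReal (b n)⁻¹ * auxUn ξ n ω := fun ω => by
      rw [ENNReal.ofReal_mul hbinv, hpt ω]
    have hfin' : (∫⁻ ω, ENNReal.ofReal ((b n)⁻¹ * ⨆ j ∈ Finset.Icc 1 n, |ξ (j:ℤ) ω|) ^ p ∂μ)
        ≠ ⊤ := by
      simp_rw [hpt2]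
      simp_rw [ENNReal.mul_rpow_of_nonneg _ _ hp0.le]
      have hUp : Measurable fun ω => auxUn ξ n ω ^ p :=
        ENNReal.continuous_rpow_const.measurable.comp (hUnmeas n)
      rw [lintegral_const_mul _ hUp]
      exact ENNReal.mul_ne_top
        (ENNReal.rpow_ne_top_of_nonneg hp0.le ENNReal.ofReal_ne_top) (hUnfin n)
    have hconv := hlp_convert μ hp0 (hVmeas.const_mul ((b n)⁻¹))
      (fun ω => mul_nonneg hbinv (hVnn ω)) hfin'
    have hNPeq : (∫⁻ ω, ENNReal.ofReal ((b n)⁻¹ * ⨆ j ∈ Finset.Icc 1 n, |ξ (j:ℤ) ω|) ^ p ∂μ)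
        ^ (1/p) = ENNReal.ofReal (b n)⁻¹ * auxNP μ p (auxUn ξ n) := by
      have : (∫⁻ ω, ENNReal.ofReal ((b n)⁻¹ * ⨆ j ∈ Finset.Icc 1 n, |ξ (j:ℤ) ω|) ^ p ∂μ) =
          ∫⁻ ω, (ENNReal.ofReal (b n)⁻¹ * auxUn ξ n ω) ^ p ∂μ :=
        lintegral_congr fun ω => by rw [hpt2 ω]
      rw [this]
      exact hlp_NP_smul μ hp _ (hUnmeas n)
    have hbound : ENNReal.ofReal (b n)⁻¹ * auxNP μ p (auxUn ξ n) ≤ ENNReal.ofReal δ := by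
      rw [← hNPeq, ← hconv]
      calc (ENNReal.ofReal (∫ ω, ((b n)⁻¹ * ⨆ j ∈ Finset.Icc 1 n, |ξ (j:ℤ) ω|) ^ p ∂μ)) ^ (1/p)
          ≤ (ENNReal.ofReal (δ ^ p)) ^ (1/p) :=
            ENNReal.rpow_le_rpow (ENNReal.ofReal_le_ofReal hrn.le) hpinv.le
        _ = ENNReal.ofReal δ := by
            rw [← ENNReal.ofReal_rpow_of_nonneg hδ.le hp0.le, hlp_rpow_inv' p hpne]
    have hb0 : ENNReal.ofReal (b n) ≠ 0 := by
      simp [ENNReal.ofReal_eq_zero, not_le, hbpos n]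
    have hbne : ENNReal.ofReal (b n) ≠ ⊤ := ENNReal.ofReal_ne_top
    calc auxNP μ p (auxUn ξ n)
        = ENNReal.ofReal (b n) * (ENNReal.ofReal (b n)⁻¹ * auxNP μ p (auxUn ξ n)) := by
          rw [← mul_assoc, ENNReal.ofReal_inv_of_pos (hbpos n),
            ENNReal.mul_inv_cancel hb0 hbne, one_mul]
      _ ≤ ENNReal.ofReal (b n) * ENNReal.ofReal δ := mul_le_mul_right hbound _
      _ = ENNReal.ofReal (δ * b n) := by
          rw [← ENNReal.ofReal_mul (hbpos n).le, mul_comm]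
  have hκ_ev : ∀ δ : ℝ, 0 < δ → ∀ᶠ n in atTop, κ ≤ ENNReal.ofReal (δ * b n) := by
    intro δ hδ
    filter_upwards [hbtop.eventually_ge_atTop (κ.toReal / δ)] with n hn
    have h1 : κ.toReal ≤ δ * b n := by
      rw [div_le_iff₀ hδ] at hn
      nlinarith [hn]
    calc κ = ENNReal.ofReal κ.toReal := (ENNReal.ofReal_toReal hκne).symm
      _ ≤ ENNReal.ofReal (δ * b n) := ENNReal.ofReal_le_ofReal h1
  -- a.e. strong measurability of the maxima of the linear process
  have hXaesm : ∀ k : ℤ, AEStronglyMeasurable (X k) μ := by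
    intro k
    have hmono : Monotone (fun N : ℕ => (Finset.range N).image (Denumerable.eqv ℤ).symm) :=
      fun N M h => Finset.image_subset_image (Finset.range_subset_range.2 h)
    refine aestronglyMeasurable_of_tendsto_ae atTop
      (fun N => (Finset.measurable_sum ((Finset.range N).image (Denumerable.eqv ℤ).symm)
        (fun j _ => (hmeas (k - j)).const_mul (a j))).aestronglyMeasurable) ?_
    filter_upwards [hX k] with ω hω
    have htend : Tendsto (fun N : ℕ => (Finset.range N).image (Denumerable.eqv ℤ).symm)
        atTop atTop :=
      tendsto_atTop_finset_of_monotone hmono fun j =>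
        ⟨Denumerable.eqv ℤ j + 1, Finset.mem_image.2
          ⟨Denumerable.eqv ℤ j, Finset.mem_range.2 (Nat.lt_succ_self _),
            Equiv.symm_apply_apply _ _⟩⟩
    exact hω.comp htend
  have hMaesm : ∀ n, 1 ≤ n → AEStronglyMeasurable
      (fun ω => (⨆ l ∈ Finset.Icc 1 n, |S l ω - A * Sξ l ω|) ^ p) μ := by
    intro n hn
    have hne : (Finset.Icc 1 n).Nonempty := ⟨1, Finset.mem_Icc.2 ⟨le_rfl, hn⟩⟩
    have hgmeas : ∀ k : ℤ, Measurable ((hXaesm k).mk (X k)) :=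
      fun k => (hXaesm k).stronglyMeasurable_mk.measurable
    have hM'meas : Measurable fun ω =>
        (⨆ l ∈ Finset.Icc 1 n,
          |(∑ k ∈ Finset.Icc 1 l, (hXaesm ((k:ℕ):ℤ)).mk (X ((k:ℕ):ℤ)) ω) - A * Sξ l ω|) ^ p := by
      refine Measurable.pow ?_ measurable_const
      refine hlp_measurable_biSup hne _ (fun l => ?_) (fun l ω => abs_nonneg _)
      exact ((Finset.measurable_sum _ fun k _ => hgmeas _).sub
        ((hSξmeas l).const_mul A)).abs
    refine hM'meas.aestronglyMeasurable.congr ?_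
    have hall : ∀ᵐ ω ∂μ, ∀ k : ℤ, X k ω = (hXaesm k).mk (X k) ω :=
      ae_all_iff.2 fun k => (hXaesm k).ae_eq_mk
    filter_upwards [hall] with ω hω
    congr 1
    refine iSup_congr fun l => iSup_congr fun hl => ?_
    rw [hS l ω, Finset.sum_congr rfl fun k _ => (hω ((k:ℕ):ℤ))]
  -- final assembly
  rw [NormedAddCommGroup.tendsto_nhds_zero]
  intro ε hε
  set δ0 : ℝ := (ε/2) ^ p⁻¹ with hδ0
  have hε2 : (0:ℝ) < ε/2 := by linarith
  have hδ0pos : 0 < δ0 := Real.rpow_pos_of_pos hε2 _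
  have hδ0p : δ0 ^ p = ε/2 := by
    rw [hδ0, ← Real.rpow_mul hε2.le, inv_mul_cancel₀ hpne, Real.rpow_one]
  -- choose the finite window of coefficients
  have hc2 : (0:ℝ) < 2 * C ^ (1/p) := by positivity
  have htail := tendsto_tsum_compl_atTop_zero (fun j : ℤ => |a j|)
  obtain ⟨s, hs⟩ := ((tendsto_order.1 htail).2 (δ0 / (2 * (2 * C ^ (1/p))))
    (by positivity)).exists
  set m : ℕ := s.sup fun j => j.natAbs with hm
  have hsm : ∀ j ∈ s, |j| ≤ (m:ℤ) := by
    intro j hj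
    rw [Int.abs_eq_natAbs]
    exact_mod_cast Finset.le_sup (f := fun j : ℤ => j.natAbs) hj
  set Ka : ℝ := ∑' j, |a j| with hKa
  have hKa0 : 0 ≤ Ka := tsum_nonneg fun j => abs_nonneg _
  set mR : ℝ := ((2*m : ℕ) : ℝ) with hmR
  have hmR0 : 0 ≤ mR := Nat.cast_nonneg _
  set Kr : ℝ := Ka * mR * (1 + mR) + 1 with hKr
  have hKaR : (0:ℝ) ≤ Ka * mR * (1 + mR) :=
    mul_nonneg (mul_nonneg hKa0 hmR0) (by linarith)
  have hKr1 : (1:ℝ) ≤ Kr := by rw [hKr]; linarith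
  have hKrpos : (0:ℝ) < Kr := by linarith
  set δ1 : ℝ := δ0 / (2 * Kr) with hδ1
  have hδ1pos : 0 < δ1 := by positivity
  have htails : (∑' x : {j : ℤ // j ∉ s}, |a ↑x|) * (2 * C ^ (1/p)) ≤ δ0 / 2 := by
    have h := hs
    have h2 : (∑' x : {j : ℤ // j ∉ s}, |a ↑x|) ≤ δ0 / (2 * (2 * C ^ (1/p))) := le_of_lt h
    calc (∑' x : {j : ℤ // j ∉ s}, |a ↑x|) * (2 * C ^ (1/p))
        ≤ (δ0 / (2 * (2 * C ^ (1/p)))) * (2 * C ^ (1/p)) :=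
          mul_le_mul_of_nonneg_right h2 hc2.le
      _ = δ0 / 2 := by field_simp
  filter_upwards [hUnNP_ev δ1 hδ1pos, hκ_ev δ1 hδ1pos, eventually_ge_atTop 1]
    with n hUn hκb hn
  have hbn := hbpos n
  -- bound the NP of the maximum
  have hNPM : auxNP μ p
      (fun ω => ENNReal.ofReal (⨆ l ∈ Finset.Icc 1 n, |S l ω - A * Sξ l ω|)) ≤
      ENNReal.ofReal (δ0 * b n) := by
    refine le_trans (master s m hsm n hn) ?_
    have hcast : ((2*m : ℕ) : ℝ≥0∞) = ENNReal.ofReal mR := by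
      rw [hmR, ENNReal.ofReal_natCast]
    have hδ1b : (0:ℝ) ≤ δ1 * b n := (mul_pos hδ1pos (hbpos n)).le
    have hterm1 : ENNReal.ofReal Ka *
        (((2*m : ℕ) : ℝ≥0∞) * (auxNP μ p (auxUn ξ n) + ((2*m : ℕ) : ℝ≥0∞) * κ)) ≤
        ENNReal.ofReal ((δ0/2) * b n) := by
      have hin : auxNP μ p (auxUn ξ n) + ((2*m : ℕ) : ℝ≥0∞) * κ ≤
          ENNReal.ofReal (δ1 * b n + mR * (δ1 * b n)) := by
        calc auxNP μ p (auxUn ξ n) + ((2*m : ℕ) : ℝ≥0∞) * κ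
            ≤ ENNReal.ofReal (δ1 * b n) +
                ENNReal.ofReal mR * ENNReal.ofReal (δ1 * b n) :=
              add_le_add hUn (by rw [hcast]; exact mul_le_mul_right hκb _)
          _ = ENNReal.ofReal (δ1 * b n + mR * (δ1 * b n)) := by
              rw [← ENNReal.ofReal_mul hmR0,
                ← ENNReal.ofReal_add hδ1b (mul_nonneg hmR0 hδ1b)]
      calc ENNReal.ofReal Ka *
          (((2*m : ℕ) : ℝ≥0∞) * (auxNP μ p (auxUn ξ n) + ((2*m : ℕ) : ℝ≥0∞) * κ))
          ≤ ENNReal.ofReal Ka *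
            (ENNReal.ofReal mR * ENNReal.ofReal (δ1 * b n + mR * (δ1 * b n))) := by
            rw [hcast] at hin ⊢
            exact mul_le_mul_right (mul_le_mul_right hin _) _
        _ = ENNReal.ofReal (Ka * (mR * (δ1 * b n + mR * (δ1 * b n)))) := by
            rw [← ENNReal.ofReal_mul hmR0, ← ENNReal.ofReal_mul hKa0]
        _ ≤ ENNReal.ofReal ((δ0/2) * b n) := by
            refine ENNReal.ofReal_le_ofReal ?_
            have hfac : Ka * mR * (1 + mR) ≤ Kr := by rw [hKr]; linarith
            calc Ka * (mR * (δ1 * b n + mR * (δ1 * b n)))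
                = (Ka * mR * (1 + mR)) * (δ1 * b n) := by ring
              _ ≤ Kr * (δ1 * b n) := mul_le_mul_of_nonneg_right hfac hδ1b
              _ = (δ0/2) * b n := by
                  rw [hδ1]; field_simp
    have hterm2 : ENNReal.ofReal (∑' x : {j : ℤ // j ∉ s}, |a ↑x|) *
        ENNReal.ofReal (2 * C ^ (1/p) * b n) ≤ ENNReal.ofReal ((δ0/2) * b n) := by
      rw [← ENNReal.ofReal_mul (tsum_nonneg fun x => abs_nonneg _)]
      refine ENNReal.ofReal_le_ofReal ?_
      calc (∑' x : {j : ℤ // j ∉ s}, |a ↑x|) * (2 * C ^ (1/p) * b n)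
          = ((∑' x : {j : ℤ // j ∉ s}, |a ↑x|) * (2 * C ^ (1/p))) * b n := by ring
        _ ≤ (δ0/2) * b n := mul_le_mul_of_nonneg_right htails hbn.le
    calc ENNReal.ofReal Ka *
          (((2*m : ℕ) : ℝ≥0∞) * (auxNP μ p (auxUn ξ n) + ((2*m : ℕ) : ℝ≥0∞) * κ)) +
        ENNReal.ofReal (∑' x : {j : ℤ // j ∉ s}, |a ↑x|) *
          ENNReal.ofReal (2 * C ^ (1/p) * b n)
        ≤ ENNReal.ofReal ((δ0/2) * b n) + ENNReal.ofReal ((δ0/2) * b n) :=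
          add_le_add hterm1 hterm2
      _ = ENNReal.ofReal (δ0 * b n) := by
          rw [← ENNReal.ofReal_add (by positivity) (by positivity)]
          congr 1; ring
  -- convert back to the real integral
  have hMnn : ∀ ω, (0:ℝ) ≤ ⨆ l ∈ Finset.Icc 1 n, |S l ω - A * Sξ l ω| :=
    fun ω => hlp_biSup_nonneg fun l => abs_nonneg _
  have hlint_le : (∫⁻ ω, ENNReal.ofReal
      ((⨆ l ∈ Finset.Icc 1 n, |S l ω - A * Sξ l ω|) ^ p) ∂μ) ≤
      ENNReal.ofReal ((δ0 * b n) ^ p) := by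
    have he : ∀ ω, ENNReal.ofReal ((⨆ l ∈ Finset.Icc 1 n, |S l ω - A * Sξ l ω|) ^ p) =
        ENNReal.ofReal (⨆ l ∈ Finset.Icc 1 n, |S l ω - A * Sξ l ω|) ^ p := fun ω =>
      (ENNReal.ofReal_rpow_of_nonneg (hMnn ω) hp0.le).symm
    calc (∫⁻ ω, ENNReal.ofReal ((⨆ l ∈ Finset.Icc 1 n, |S l ω - A * Sξ l ω|) ^ p) ∂μ)
        = ∫⁻ ω, ENNReal.ofReal (⨆ l ∈ Finset.Icc 1 n, |S l ω - A * Sξ l ω|) ^ p ∂μ :=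
          lintegral_congr fun ω => he ω
      _ = (auxNP μ p (fun ω =>
            ENNReal.ofReal (⨆ l ∈ Finset.Icc 1 n, |S l ω - A * Sξ l ω|))) ^ p := by
          rw [auxNP, hlp_rpow_inv p hpne]
      _ ≤ ENNReal.ofReal (δ0 * b n) ^ p := ENNReal.rpow_le_rpow hNPM hp0.le
      _ = ENNReal.ofReal ((δ0 * b n) ^ p) :=
          ENNReal.ofReal_rpow_of_nonneg (by positivity) hp0.le
  have hint_le : (∫ ω, (⨆ l ∈ Finset.Icc 1 n, |S l ω - A * Sξ l ω|) ^ p ∂μ) ≤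
      (δ0 * b n) ^ p := by
    rw [integral_eq_lintegral_of_nonneg_ae
      (Filter.Eventually.of_forall fun ω => Real.rpow_nonneg (hMnn ω) p) (hMaesm n hn)]
    exact ENNReal.toReal_le_of_le_ofReal (by positivity) hlint_le
  have hfnn : 0 ≤ b n ^ (-p) * ∫ ω, (⨆ l ∈ Finset.Icc 1 n, |S l ω - A * Sξ l ω|) ^ p ∂μ := by
    refine mul_nonneg (Real.rpow_nonneg hbn.le _) ?_
    exact integral_nonneg fun ω => Real.rpow_nonneg (hMnn ω) p
  rw [Real.norm_eq_abs, abs_of_nonneg hfnn]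
  have hfinal : b n ^ (-p) * (∫ ω, (⨆ l ∈ Finset.Icc 1 n, |S l ω - A * Sξ l ω|) ^ p ∂μ) ≤
      ε / 2 := by
    calc b n ^ (-p) * (∫ ω, (⨆ l ∈ Finset.Icc 1 n, |S l ω - A * Sξ l ω|) ^ p ∂μ)
        ≤ b n ^ (-p) * (δ0 * b n) ^ p :=
          mul_le_mul_of_nonneg_left hint_le (Real.rpow_nonneg hbn.le _)
      _ = δ0 ^ p := by
          rw [Real.mul_rpow hδ0pos.le hbn.le, ← mul_assoc, mul_comm (b n ^ (-p)),
            mul_assoc, ← Real.rpow_add hbn, neg_add_cancel, Real.rpow_zero, mul_one]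
      _ = ε / 2 := hδ0p
  linarith
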